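/- For real x ≥ 1, y ≥ 0 and positive integers h, a_0 < b_0 with a_0 dividing b_0, the formal power series (1 + y q^{a_0})/(1 − x q^{a_0}) · (x q^{a_0})^h − (1 + y q^{b_0})/(1 − x q^{b_0}) · (x q^{b_0})^h has non-negative coefficients. -/

import Mathlib

open PowerSeries

lemma geom_inv (x : ℝ) (c : ℕ) (hc : 0 < c) :
    (1 - C x * X ^ c)⁻¹ = mk fun n => if c ∣ n then x ^ (n / c) else 0 := by
  rw [PowerSeries.inv_eq_iff_mul_eq_one]
  · ext n
    rw [mul_sub, mul_one, map_sub, ← mul_assoc, mul_comm _ (C x), mul_assoc,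
      coeff_C_mul, coeff_mul_X_pow', coeff_one]
    simp only [coeff_mk]
    by_cases hd : c ∣ n
    · obtain ⟨m, rfl⟩ := hd
      rw [if_pos ⟨m, rfl⟩, Nat.mul_div_cancel_left _ hc]
      rcases Nat.eq_zero_or_pos m with rfl | hm
      · simp [Nat.not_le.mpr hc, hc.ne']
      · have hcn : c ≤ c * m := Nat.le_mul_of_pos_right c hm
        rw [if_pos hcn, if_neg (by positivity : 0 < c * m).ne',
          if_pos (Nat.dvd_sub (Dvd.intro m rfl) dvd_rfl)]
        have h1 : c * m - c = c * (m - 1) := by rw [Nat.mul_sub_one]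
        rw [h1, Nat.mul_div_cancel_left _ hc]
        have : x * x ^ (m - 1) = x ^ m := by
          rw [← pow_succ']
          congr 1
          omega
        rw [this]
        simp [hm.ne']
    · rw [if_neg hd]
      have hn : n ≠ 0 := by rintro rfl; exact hd (dvd_zero c)
      rw [if_neg hn]
      split_ifs with hcn hd2
      · exact absurd (by have := Nat.sub_add_cancel hcn; calc c ∣ n - c + c := Dvd.dvd.add hd2 dvd_rfl
          _ = n := this) hd
      · ring
      · ring
  · simp [hc.ne']

lemma coeffF (x y : ℝ) (h c : ℕ) (hc : 0 < c) (N : ℕ) :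
    coeff N ((1 + C y * X ^ c) * (1 - C x * X ^ c)⁻¹ * (C x * X ^ c) ^ h)
      = if c ∣ N then
          (if h ≤ N / c then x ^ (N / c) else 0) +
            y * (if h + 1 ≤ N / c then x ^ (N / c - 1) else 0)
        else 0 := by
  rw [geom_inv x c hc]
  have hp : (C x * X ^ c : ℝ⟦X⟧) ^ h = C (x ^ h) * X ^ (c * h) := by
    rw [mul_pow, ← map_pow, ← pow_mul]
  rw [hp]
  have rearr : (1 + C y * X ^ c) * (mk fun n => if c ∣ n then x ^ (n / c) else 0) *
      (C (x ^ h) * X ^ (c * h)) =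
      C (x ^ h) * ((1 + C y * X ^ c) *
        (mk fun n => if c ∣ n then x ^ (n / c) else 0) * X ^ (c * h)) := by ring
  rw [rearr, coeff_C_mul, coeff_mul_X_pow', add_mul, one_mul, mul_assoc]
  by_cases hd : c ∣ N
  · obtain ⟨m, rfl⟩ := hd
    rw [if_pos (Dvd.intro m rfl), Nat.mul_div_cancel_left _ hc]
    by_cases hhm : h ≤ m
    · rw [if_pos (Nat.mul_le_mul_left c hhm)]
      have e0 : c * m - c * h = c * (m - h) := (Nat.mul_sub c m h).symm
      rw [e0, map_add, coeff_mk, if_pos (Dvd.intro (m - h) rfl),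
        Nat.mul_div_cancel_left _ hc, coeff_C_mul, coeff_X_pow_mul']
      by_cases hm1 : h + 1 ≤ m
      · rw [if_pos (Nat.le_mul_of_pos_right c (by omega) : c ≤ c * (m - h))]
        have e1 : c * (m - h) - c = c * (m - h - 1) := by
          rw [Nat.mul_sub c (m - h) 1, Nat.mul_one]
        rw [e1, coeff_mk, if_pos (Dvd.intro (m - h - 1) rfl), Nat.mul_div_cancel_left _ hc,
          if_pos hhm, if_pos hm1]
        have p1 : x ^ h * x ^ (m - h) = x ^ m := by rw [← pow_add]; congr 1; omega
        have p2 : x ^ h * (y * x ^ (m - h - 1)) = y * x ^ (m - 1) := by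
          rw [mul_comm (x ^ h), mul_assoc, ← pow_add]; congr 2; omega
        rw [mul_add, p1, p2]
      · have hm0 : m - h = 0 := by omega
        rw [if_neg (by rw [hm0, Nat.mul_zero]; omega : ¬ c ≤ c * (m - h)),
          if_pos hhm, if_neg hm1, hm0]
        have hmh : m = h := by omega
        subst hmh
        simp
    · rw [if_neg (fun hle => hhm (Nat.le_of_mul_le_mul_left hle hc)),
        if_neg hhm, if_neg (by omega)]
      simp
  · rw [if_neg hd]
    split_ifs with hle
    · have h1 : ¬ c ∣ N - c * h := fun hx => hd (by
        have := Nat.sub_add_cancel hle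
        calc c ∣ (N - c * h) + c * h := Dvd.dvd.add hx (Dvd.intro h rfl)
          _ = N := this)
      rw [map_add, coeff_mk, if_neg h1, coeff_C_mul, coeff_X_pow_mul']
      split_ifs with hle2
      · rw [coeff_mk, if_neg (fun hx => h1 (by
          have := Nat.sub_add_cancel hle2
          calc c ∣ (N - c * h - c) + c := Dvd.dvd.add hx dvd_rfl
            _ = N - c * h := this))]
        simp
      · simp
    · ring

/-- For reals `x ≥ 1`, `y ≥ 0` and positive integers `h` and `a₀ < b₀` with
`a₀ ∣ b₀`, the formal power series
`(1 + y q^{a₀})/(1 − x q^{a₀}) · (x q^{a₀})^h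
  − (1 + y q^{b₀})/(1 − x q^{b₀}) · (x q^{b₀})^h`
has non-negative coefficients. -/
theorem andrews_analogue_base (x y : ℝ) (hx : 1 ≤ x) (hy : 0 ≤ y)
    (h a₀ b₀ : ℕ) (hh : 0 < h) (ha : 0 < a₀) (hab : a₀ < b₀) (hdvd : a₀ ∣ b₀)
    (N : ℕ) :
    0 ≤ coeff N
      ((1 + C y * X ^ a₀) * (1 - C x * X ^ a₀)⁻¹ * (C x * X ^ a₀) ^ h -
        (1 + C y * X ^ b₀) * (1 - C x * X ^ b₀)⁻¹ * (C x * X ^ b₀) ^ h) := by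
  have hx0 : (0 : ℝ) < x := lt_of_lt_of_le one_pos hx
  have hb : 0 < b₀ := ha.trans hab
  rw [map_sub, coeffF x y h a₀ ha N, coeffF x y h b₀ hb N, sub_nonneg]
  have key : ∀ n m : ℕ, n ≤ m →
      (if h ≤ n then x ^ n else 0) + y * (if h + 1 ≤ n then x ^ (n - 1) else 0) ≤
      (if h ≤ m then x ^ m else 0) + y * (if h + 1 ≤ m then x ^ (m - 1) else 0) := by
    intro n m hnm
    apply add_le_add
    · split_ifs with h1 h2
      · exact pow_le_pow_right₀ hx hnm
      · exact absurd (h1.trans hnm) h2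
      · positivity
      · exact le_rfl
    · apply mul_le_mul_of_nonneg_left _ hy
      split_ifs with h1 h2
      · exact pow_le_pow_right₀ hx (by omega)
      · exact absurd (h1.trans hnm) h2
      · positivity
      · exact le_rfl
  by_cases hbN : b₀ ∣ N
  · rw [if_pos hbN, if_pos (hdvd.trans hbN)]
    exact key _ _ (Nat.div_le_div_left hab.le ha)
  · rw [if_neg hbN]
    split_ifs <;> positivity
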